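/- If V ⊆ T are subgroups of an abelian group with T/V finite and k is a positive integer such that V/V^k and T/T^k are finite of the same cardinality, then the kernel of the natural map V/V^k → T/T^k has cardinality equal to the index [T : V*T^k], which divides [T : V]. -/

import Mathlib

/-- If `V ≤ T` are subgroups of an abelian group with `T/V` finite, and `V/V^k`,
`T/T^k` are finite of the same cardinality, then the kernel of the natural map
`V/V^k → T/T^k` has cardinality `[T : V·T^k]`, which divides `[T : V]`. -/
theorem kernel_card_eq_index
    {G : Type*} [CommGroup G] (V T : Subgroup G) (hVT : V ≤ T)
    (hfin : (V.relIndex T) ≠ 0)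
    (k : ℕ) (hk : 0 < k)
    (h : (powMonoidHom k : ↥V →* ↥V).range ≤
      ((powMonoidHom k : ↥T →* ↥T).range).comap (Subgroup.inclusion hVT))
    (hVfin : Finite (↥V ⧸ (powMonoidHom k : ↥V →* ↥V).range))
    (hTfin : Finite (↥T ⧸ (powMonoidHom k : ↥T →* ↥T).range))
    (hcard : Nat.card (↥V ⧸ (powMonoidHom k : ↥V →* ↥V).range)
      = Nat.card (↥T ⧸ (powMonoidHom k : ↥T →* ↥T).range)) :
    Nat.card (MonoidHom.ker
        (QuotientGroup.map (powMonoidHom k : ↥V →* ↥V).range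
          (powMonoidHom k : ↥T →* ↥T).range (Subgroup.inclusion hVT) h))
      = (V ⊔ T.map (powMonoidHom k)).relIndex T ∧
    (V ⊔ T.map (powMonoidHom k)).relIndex T ∣ V.relIndex T := by
  set M := (powMonoidHom k : ↥V →* ↥V).range with hM
  set N := (powMonoidHom k : ↥T →* ↥T).range with hN
  set f := QuotientGroup.map M N (Subgroup.inclusion hVT) h with hf
  set S := V ⊔ T.map (powMonoidHom k) with hS
  have hTk : T.map (powMonoidHom k) ≤ T := by
    rintro x ⟨t, ht, rfl⟩
    exact T.pow_mem ht k
  have hST : S ≤ T := sup_le hVT hTk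
  -- kernel of mk' N is contained in S.subgroupOf T
  have hNle : N ≤ S.subgroupOf T := by
    rintro x ⟨t, rfl⟩
    exact Subgroup.mem_sup_right ⟨(t : G), t.2, rfl⟩
  -- range of f
  have hrange : f.range = (S.subgroupOf T).map (QuotientGroup.mk' N) := by
    ext x
    constructor
    · rintro ⟨y, rfl⟩
      obtain ⟨v, rfl⟩ := QuotientGroup.mk'_surjective M y
      exact ⟨Subgroup.inclusion hVT v, Subgroup.mem_sup_left v.2, rfl⟩
    · rintro ⟨t, ht, rfl⟩
      rw [SetLike.mem_coe, Subgroup.mem_subgroupOf, hS, Subgroup.mem_sup] at ht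
      obtain ⟨v, hv, z, hz, hvz⟩ := ht
      obtain ⟨g, hg, rfl⟩ := hz
      refine ⟨QuotientGroup.mk' M ⟨v, hv⟩, ?_⟩
      show QuotientGroup.mk' N (Subgroup.inclusion hVT ⟨v, hv⟩) = QuotientGroup.mk' N t
      rw [QuotientGroup.mk'_eq_mk']
      refine ⟨(⟨g, hg⟩ : ↥T) ^ k, ⟨⟨g, hg⟩, rfl⟩, ?_⟩
      ext
      exact hvz
  -- index computation
  have hindex : f.range.index = S.relIndex T := by
    rw [hrange, Subgroup.relIndex]
    rw [← Subgroup.index_comap_of_surjective ((S.subgroupOf T).map (QuotientGroup.mk' N))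
      (QuotientGroup.mk'_surjective N)]
    congr 1
    rw [Subgroup.comap_map_eq, QuotientGroup.ker_mk', sup_eq_left.mpr hNle]
  have hcard1 : Nat.card f.ker * Nat.card f.range = Nat.card (↥V ⧸ M) := by
    rw [← Nat.card_congr (QuotientGroup.quotientKerEquivRange f).toEquiv,
      mul_comm]
    exact (Subgroup.card_eq_card_quotient_mul_card_subgroup f.ker).symm
  have hcard2 : Nat.card f.range * f.range.index = Nat.card (↥T ⧸ N) :=
    f.range.card_mul_index
  have hrange_ne : Nat.card f.range ≠ 0 := Nat.card_pos.ne'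
  have hmain : Nat.card f.ker = S.relIndex T := by
    rw [← hindex]
    have : Nat.card f.ker * Nat.card f.range = f.range.index * Nat.card f.range := by
      rw [hcard1, hcard, ← hcard2, mul_comm]
    exact Nat.eq_of_mul_eq_mul_right (Nat.pos_of_ne_zero hrange_ne) this
  refine ⟨hmain, ?_⟩
  exact Dvd.intro_left _ (Subgroup.relIndex_mul_relIndex V S T le_sup_left hST)
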